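/- Under the i.i.d. unit-sphere assumption with positive definite Σ_x = E[x_t x_tᵀ] and γ ∈ (0,2), the LMS iterates θ^t = θ^{t-1} - γ(x_tᵀθ^{t-1} - x_tᵀθ*)x_t with θ^0 = 0 satisfy E[‖θ^t - θ*‖²] ≤ (1 - γ(2-γ)λ_min(Σ_x))^t · ‖θ*‖². -/

import Mathlib

open Matrix MeasureTheory ProbabilityTheory

private lemma lms_meas_dot {α : Type*} [MeasurableSpace α] {d : ℕ} {f g : α → Fin d → ℝ}
    (hf : Measurable f) (hg : Measurable g) : Measurable fun a => f a ⬝ᵥ g a := by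
  simp only [dotProduct]
  exact Finset.measurable_sum _ fun i _ => hf.eval.mul hg.eval

private lemma lms_int_of_bound {Ω : Type*} [MeasurableSpace Ω] (μ : Measure Ω)
    [IsProbabilityMeasure μ] {f : Ω → ℝ} (hf : Measurable f) {C : ℝ}
    (hC : ∀ ω, |f ω| ≤ C) : Integrable f μ :=
  ⟨hf.aestronglyMeasurable, HasFiniteIntegral.of_bounded
    (ae_of_all μ (by simpa [Real.norm_eq_abs] using hC))⟩

private lemma lms_alg {d : ℕ} (e xx : Fin d → ℝ) (γ : ℝ) (hx : xx ⬝ᵥ xx = 1) :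
    (e - (γ * (xx ⬝ᵥ e)) • xx) ⬝ᵥ (e - (γ * (xx ⬝ᵥ e)) • xx) =
      e ⬝ᵥ e - γ * (2 - γ) * (xx ⬝ᵥ e) ^ 2 := by
  simp only [dotProduct_sub, sub_dotProduct, dotProduct_smul, smul_dotProduct,
    smul_eq_mul, hx]
  rw [dotProduct_comm e xx]
  ring

theorem lms_expected_mse_bound {d : ℕ} {Ω : Type*} [MeasurableSpace Ω]
    (μ : Measure Ω) [IsProbabilityMeasure μ]
    (x : ℕ → Ω → Fin d → ℝ) (hmeas : ∀ t, Measurable (x t))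
    (hindep : iIndepFun x μ)
    (hident : ∀ s t : ℕ, IdentDistrib (x s) (x t) μ μ)
    (hsphere : ∀ t ω, x t ω ⬝ᵥ x t ω = 1)
    (Sx : Matrix (Fin d) (Fin d) ℝ)
    (hS : ∀ t i j, Sx i j = ∫ ω, x t ω i * x t ω j ∂μ)
    (hpd : Sx.PosDef)
    (lammin : ℝ)
    (heig : ∃ v : Fin d → ℝ, v ⬝ᵥ v = 1 ∧ Sx *ᵥ v = lammin • v)
    (hlow : ∀ v : Fin d → ℝ, lammin * (v ⬝ᵥ v) ≤ v ⬝ᵥ (Sx *ᵥ v))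
    (γ : ℝ) (hγ0 : 0 < γ) (hγ2 : γ < 2)
    (θstar : Fin d → ℝ)
    (θ : ℕ → Ω → Fin d → ℝ)
    (h0 : ∀ ω, θ 0 ω = 0)
    (hrec : ∀ t ω, θ (t + 1) ω =
      θ t ω - (γ * (x t ω ⬝ᵥ θ t ω - x t ω ⬝ᵥ θstar)) • x t ω) :
    ∀ t : ℕ, ∫ ω, (θ t ω - θstar) ⬝ᵥ (θ t ω - θstar) ∂μ ≤
      (1 - γ * (2 - γ) * lammin) ^ t * (θstar ⬝ᵥ θstar) := by
  -- basic facts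
  have hnn : ∀ v : Fin d → ℝ, 0 ≤ v ⬝ᵥ v := fun v =>
    Finset.sum_nonneg fun i _ => mul_self_nonneg _
  -- measurability of θ
  have hθmeas : ∀ t, Measurable (θ t) := by
    intro t; induction t with
    | zero =>
      have : θ 0 = fun _ => (0 : Fin d → ℝ) := funext h0
      rw [this]; exact measurable_const
    | succ t ih =>
      have hrw : θ (t + 1) = fun ω =>
          θ t ω - (γ * (x t ω ⬝ᵥ θ t ω - x t ω ⬝ᵥ θstar)) • x t ω := funext (hrec t)
      rw [hrw]
      exact ih.sub ((((lms_meas_dot (hmeas t) ih).sub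
        (lms_meas_dot (hmeas t) measurable_const)).const_mul γ).smul (hmeas t))
  -- key pointwise identity
  have hkey : ∀ t ω, (θ (t + 1) ω - θstar) ⬝ᵥ (θ (t + 1) ω - θstar) =
      (θ t ω - θstar) ⬝ᵥ (θ t ω - θstar)
        - γ * (2 - γ) * (x t ω ⬝ᵥ (θ t ω - θstar)) ^ 2 := by
    intro t ω
    have hx := hsphere t ω
    rw [hrec t ω]
    have h1 : θ t ω - (γ * (x t ω ⬝ᵥ θ t ω - x t ω ⬝ᵥ θstar)) • x t ω - θstar =
        (θ t ω - θstar) - (γ * (x t ω ⬝ᵥ (θ t ω - θstar))) • x t ω := by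
      rw [dotProduct_sub]; abel
    rw [h1]
    exact lms_alg (θ t ω - θstar) (x t ω) γ hx
  -- pointwise bound
  have hbd : ∀ t ω, (θ t ω - θstar) ⬝ᵥ (θ t ω - θstar) ≤ θstar ⬝ᵥ θstar := by
    intro t; induction t with
    | zero =>
      intro ω
      simp [h0 ω, zero_sub, neg_dotProduct, dotProduct_neg, le_refl]
    | succ t ih =>
      intro ω
      rw [hkey t ω]
      have h3 : 0 ≤ γ * (2 - γ) * (x t ω ⬝ᵥ (θ t ω - θstar)) ^ 2 :=
        mul_nonneg (mul_nonneg hγ0.le (by linarith)) (sq_nonneg _)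
      linarith [ih ω]
  -- component bounds
  set B : ℝ := Real.sqrt (θstar ⬝ᵥ θstar) with hB
  have hB0 : 0 ≤ B := Real.sqrt_nonneg _
  have hcomp_e : ∀ t ω i, |θ t ω i - θstar i| ≤ B := by
    intro t ω i
    apply Real.abs_le_sqrt
    calc (θ t ω i - θstar i) ^ 2
        = (θ t ω - θstar) i * (θ t ω - θstar) i := by simp [sq]
      _ ≤ (θ t ω - θstar) ⬝ᵥ (θ t ω - θstar) :=
          Finset.single_le_sum (f := fun j => (θ t ω - θstar) j * (θ t ω - θstar) j)
            (fun j _ => mul_self_nonneg _) (Finset.mem_univ i)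
      _ ≤ θstar ⬝ᵥ θstar := hbd t ω
  have hcomp_x : ∀ t ω i, |x t ω i| ≤ 1 := by
    intro t ω i
    have h1 : (x t ω i) ^ 2 ≤ 1 := by
      calc (x t ω i) ^ 2 = x t ω i * x t ω i := by rw [sq]
        _ ≤ x t ω ⬝ᵥ x t ω := Finset.single_le_sum (f := fun j => x t ω j * x t ω j)
            (fun j _ => mul_self_nonneg _) (Finset.mem_univ i)
        _ = 1 := hsphere t ω
    nlinarith [sq_abs (x t ω i), abs_nonneg (x t ω i)]
  -- Cauchy-Schwarz bound for x ⬝ v with ‖x‖ = 1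
  have hCSx : ∀ t ω (v : Fin d → ℝ), (x t ω ⬝ᵥ v) ^ 2 ≤ v ⬝ᵥ v := by
    intro t ω v
    have hCS := Finset.sum_mul_sq_le_sq_mul_sq Finset.univ (fun i => x t ω i) (fun i => v i)
    have hx2 : (∑ i, x t ω i ^ 2) = 1 := by
      have h := hsphere t ω
      simpa [dotProduct, sq] using h
    calc (x t ω ⬝ᵥ v) ^ 2 = (∑ i, x t ω i * v i) ^ 2 := rfl
      _ ≤ (∑ i, x t ω i ^ 2) * ∑ i, v i ^ 2 := hCS
      _ = ∑ i, v i ^ 2 := by rw [hx2, one_mul]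
      _ = v ⬝ᵥ v := by simp [dotProduct, sq]
  have hdotbd : ∀ t ω, (x t ω ⬝ᵥ (θ t ω - θstar)) ^ 2 ≤ θstar ⬝ᵥ θstar :=
    fun t ω => le_trans (hCSx t ω _) (hbd t ω)
  -- integrability facts
  have hint_e2 : ∀ t, Integrable (fun ω => (θ t ω - θstar) ⬝ᵥ (θ t ω - θstar)) μ := by
    intro t
    refine lms_int_of_bound μ (lms_meas_dot ((hθmeas t).sub measurable_const)
      ((hθmeas t).sub measurable_const)) (C := θstar ⬝ᵥ θstar) fun ω => ?_
    rw [abs_of_nonneg (hnn _)]; exact hbd t ω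
  have hint_sq : ∀ t, Integrable (fun ω => (x t ω ⬝ᵥ (θ t ω - θstar)) ^ 2) μ := by
    intro t
    refine lms_int_of_bound μ ((lms_meas_dot (hmeas t)
      ((hθmeas t).sub measurable_const)).pow_const 2) (C := θstar ⬝ᵥ θstar) fun ω => ?_
    rw [abs_of_nonneg (sq_nonneg _)]; exact hdotbd t ω
  have hint_xx : ∀ t (i j : Fin d), Integrable (fun ω => x t ω i * x t ω j) μ := by
    intro t i j
    refine lms_int_of_bound μ ((hmeas t).eval.mul (hmeas t).eval) (C := 1) fun ω => ?_
    rw [abs_mul]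
    calc |x t ω i| * |x t ω j| ≤ 1 * 1 :=
      mul_le_mul (hcomp_x t ω i) (hcomp_x t ω j) (abs_nonneg _) zero_le_one
      _ = 1 := one_mul 1
  have hint_ee : ∀ t (i j : Fin d),
      Integrable (fun ω => (θ t ω i - θstar i) * (θ t ω j - θstar j)) μ := by
    intro t i j
    refine lms_int_of_bound μ (((hθmeas t).eval.sub measurable_const).mul
      ((hθmeas t).eval.sub measurable_const)) (C := B * B) fun ω => ?_
    rw [abs_mul]
    exact mul_le_mul (hcomp_e t ω i) (hcomp_e t ω j) (abs_nonneg _) hB0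
  -- functional representation of θ t
  have hFun : ∀ t, ∃ F : (Fin t → Fin d → ℝ) → Fin d → ℝ,
      Measurable F ∧ ∀ ω, θ t ω = F fun i : Fin t => x i ω := by
    intro t; induction t with
    | zero => exact ⟨fun _ => 0, measurable_const, fun ω => h0 ω⟩
    | succ t ih =>
      obtain ⟨F, hF, hFe⟩ := ih
      refine ⟨fun g => F (fun i => g i.castSucc) -
        (γ * (g (Fin.last t) ⬝ᵥ F (fun i => g i.castSucc) -
          g (Fin.last t) ⬝ᵥ θstar)) • g (Fin.last t), ?_, ?_⟩
      · have hinit : Measurable fun g : Fin (t + 1) → Fin d → ℝ => F fun i => g i.castSucc :=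
          hF.comp (measurable_pi_lambda _ fun i => measurable_pi_apply _)
        have hlast : Measurable fun g : Fin (t + 1) → Fin d → ℝ => g (Fin.last t) :=
          measurable_pi_apply _
        exact hinit.sub ((((lms_meas_dot hlast hinit).sub
          (lms_meas_dot hlast measurable_const)).const_mul γ).smul hlast)
      · intro ω
        rw [hrec t ω, hFe ω]
        rfl
  -- independence of x t and θ t
  have hindepθ : ∀ t, IndepFun (x t) (θ t) μ := by
    intro t
    obtain ⟨F, hF, hFe⟩ := hFun t
    have hdisj : Disjoint ({t} : Finset ℕ) (Finset.range t) := by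
      simp [Finset.disjoint_left]
    have h1 := hindep.indepFun_finset {t} (Finset.range t) hdisj hmeas
    have h2 := h1.comp (φ := fun g : ↥({t} : Finset ℕ) → Fin d → ℝ =>
        g ⟨t, Finset.mem_singleton_self t⟩)
      (ψ := fun g : ↥(Finset.range t) → Fin d → ℝ =>
        F fun i : Fin t => g ⟨(i : ℕ), Finset.mem_range.mpr i.isLt⟩)
      (_mγ := inferInstance) (_mγ' := inferInstance)
      (measurable_pi_apply _)
      (hF.comp (measurable_pi_lambda _ fun i => measurable_pi_apply _))
    have hxeq : x t = (fun g : ↥({t} : Finset ℕ) → Fin d → ℝ =>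
        g ⟨t, Finset.mem_singleton_self t⟩) ∘
        fun a (i : ↥({t} : Finset ℕ)) => x i a := rfl
    have hθeq : θ t = (fun g : ↥(Finset.range t) → Fin d → ℝ =>
        F fun i : Fin t => g ⟨(i : ℕ), Finset.mem_range.mpr i.isLt⟩) ∘
        fun a (i : ↥(Finset.range t)) => x i a := by
      funext ω; exact hFe ω
    rw [hxeq, hθeq]
    exact h2
  -- the main moment inequality
  have hquad : ∀ t, lammin * ∫ ω, (θ t ω - θstar) ⬝ᵥ (θ t ω - θstar) ∂μ ≤
      ∫ ω, (x t ω ⬝ᵥ (θ t ω - θstar)) ^ 2 ∂μ := by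
    intro t
    have hint_term : ∀ i j : Fin d, Integrable
        (fun ω => x t ω i * x t ω j * ((θ t ω i - θstar i) * (θ t ω j - θstar j))) μ := by
      intro i j
      refine lms_int_of_bound μ (((hmeas t).eval.mul (hmeas t).eval).mul
        (((hθmeas t).eval.sub measurable_const).mul
          ((hθmeas t).eval.sub measurable_const))) (C := B * B) fun ω => ?_
      rw [abs_mul]
      have h1 : |x t ω i * x t ω j| ≤ 1 := by
        rw [abs_mul]
        calc |x t ω i| * |x t ω j| ≤ 1 * 1 :=
          mul_le_mul (hcomp_x t ω i) (hcomp_x t ω j) (abs_nonneg _) zero_le_one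
          _ = 1 := one_mul 1
      have h2 : |(θ t ω i - θstar i) * (θ t ω j - θstar j)| ≤ B * B := by
        rw [abs_mul]
        exact mul_le_mul (hcomp_e t ω i) (hcomp_e t ω j) (abs_nonneg _) hB0
      calc |x t ω i * x t ω j| * |(θ t ω i - θstar i) * (θ t ω j - θstar j)|
          ≤ 1 * (B * B) := mul_le_mul h1 h2 (abs_nonneg _) zero_le_one
        _ = B * B := one_mul _
    have hintc : ∀ i j : Fin d, Integrable
        (fun ω => Sx i j * ((θ t ω i - θstar i) * (θ t ω j - θstar j))) μ :=
      fun i j => (hint_ee t i j).const_mul _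
    -- independence factorization
    have hip : ∀ i j : Fin d,
        ∫ ω, x t ω i * x t ω j * ((θ t ω i - θstar i) * (θ t ω j - θstar j)) ∂μ =
        Sx i j * ∫ ω, (θ t ω i - θstar i) * (θ t ω j - θstar j) ∂μ := by
      intro i j
      have hind := (hindepθ t).comp (φ := fun v : Fin d → ℝ => v i * v j)
        (ψ := fun v : Fin d → ℝ => (v i - θstar i) * (v j - θstar j))
        (_mγ := inferInstance) (_mγ' := inferInstance)
        (by fun_prop)
        (by fun_prop)
      have h := hind.integral_mul_eq_mul_integral (hint_xx t i j).aestronglyMeasurable (hint_ee t i j).aestronglyMeasurable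
      rw [hS t i j]
      exact h
    -- expand the square into a double sum
    have hsq : ∀ ω, (x t ω ⬝ᵥ (θ t ω - θstar)) ^ 2 =
        ∑ i, ∑ j, x t ω i * x t ω j * ((θ t ω i - θstar i) * (θ t ω j - θstar j)) := by
      intro ω
      have h1 : (x t ω ⬝ᵥ (θ t ω - θstar)) = ∑ i, x t ω i * (θ t ω i - θstar i) := rfl
      rw [h1, sq, Finset.sum_mul_sum]
      refine Finset.sum_congr rfl fun i _ => Finset.sum_congr rfl fun j _ => by ring
    have hI1 : ∫ ω, (x t ω ⬝ᵥ (θ t ω - θstar)) ^ 2 ∂μ =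
        ∑ i, ∑ j, ∫ ω, x t ω i * x t ω j *
          ((θ t ω i - θstar i) * (θ t ω j - θstar j)) ∂μ := by
      rw [show (fun ω => (x t ω ⬝ᵥ (θ t ω - θstar)) ^ 2) = fun ω =>
        ∑ i, ∑ j, x t ω i * x t ω j * ((θ t ω i - θstar i) * (θ t ω j - θstar j))
        from funext hsq]
      rw [integral_finset_sum _ fun i _ => integrable_finset_sum _ fun j _ => hint_term i j]
      exact Finset.sum_congr rfl fun i _ =>
        integral_finset_sum _ fun j _ => hint_term i j
    -- the quadratic form pointwise
    have hpt : ∀ ω, (θ t ω - θstar) ⬝ᵥ (Sx *ᵥ (θ t ω - θstar)) =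
        ∑ i, ∑ j, Sx i j * ((θ t ω i - θstar i) * (θ t ω j - θstar j)) := by
      intro ω
      simp only [dotProduct, mulVec, Pi.sub_apply]
      refine Finset.sum_congr rfl fun i _ => ?_
      rw [Finset.mul_sum]
      exact Finset.sum_congr rfl fun j _ => by ring
    have hQ : Integrable (fun ω => (θ t ω - θstar) ⬝ᵥ (Sx *ᵥ (θ t ω - θstar))) μ := by
      rw [show (fun ω => (θ t ω - θstar) ⬝ᵥ (Sx *ᵥ (θ t ω - θstar))) = fun ω =>
        ∑ i, ∑ j, Sx i j * ((θ t ω i - θstar i) * (θ t ω j - θstar j))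
        from funext hpt]
      exact integrable_finset_sum _ fun i _ => integrable_finset_sum _ fun j _ => hintc i j
    have hI2 : ∫ ω, (θ t ω - θstar) ⬝ᵥ (Sx *ᵥ (θ t ω - θstar)) ∂μ =
        ∑ i, ∑ j, Sx i j * ∫ ω, (θ t ω i - θstar i) * (θ t ω j - θstar j) ∂μ := by
      rw [show (fun ω => (θ t ω - θstar) ⬝ᵥ (Sx *ᵥ (θ t ω - θstar))) = fun ω =>
        ∑ i, ∑ j, Sx i j * ((θ t ω i - θstar i) * (θ t ω j - θstar j))
        from funext hpt]
      rw [integral_finset_sum _ fun i _ => integrable_finset_sum _ fun j _ => hintc i j]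
      refine Finset.sum_congr rfl fun i _ => ?_
      rw [integral_finset_sum _ fun j _ => hintc i j]
      exact Finset.sum_congr rfl fun j _ => integral_const_mul _ _
    have hD : lammin * ∫ ω, (θ t ω - θstar) ⬝ᵥ (θ t ω - θstar) ∂μ ≤
        ∫ ω, (θ t ω - θstar) ⬝ᵥ (Sx *ᵥ (θ t ω - θstar)) ∂μ := by
      rw [← integral_const_mul]
      exact integral_mono ((hint_e2 t).const_mul _) hQ fun ω => hlow _
    calc lammin * ∫ ω, (θ t ω - θstar) ⬝ᵥ (θ t ω - θstar) ∂μ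
        ≤ ∫ ω, (θ t ω - θstar) ⬝ᵥ (Sx *ᵥ (θ t ω - θstar)) ∂μ := hD
      _ = ∑ i, ∑ j, Sx i j * ∫ ω, (θ t ω i - θstar i) * (θ t ω j - θstar j) ∂μ := hI2
      _ = ∑ i, ∑ j, ∫ ω, x t ω i * x t ω j *
            ((θ t ω i - θstar i) * (θ t ω j - θstar j)) ∂μ :=
          Finset.sum_congr rfl fun i _ => Finset.sum_congr rfl fun j _ => (hip i j).symm
      _ = ∫ ω, (x t ω ⬝ᵥ (θ t ω - θstar)) ^ 2 ∂μ := hI1.symm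
  -- bounds on lammin
  obtain ⟨v, hv1, hveig⟩ := heig
  have hvSv : v ⬝ᵥ (Sx *ᵥ v) = lammin := by
    rw [hveig, dotProduct_smul, smul_eq_mul, hv1, mul_one]
  have hlam0 : 0 < lammin := by
    have hv0 : v ≠ 0 := by
      intro h; rw [h] at hv1; simp [dotProduct] at hv1
    have h := hpd.dotProduct_mulVec_pos hv0
    rwa [show star v = v from rfl, hvSv] at h
  have hlam1 : lammin ≤ 1 := by
    have hptv : ∀ ω, (x 0 ω ⬝ᵥ v) ^ 2 = ∑ i, ∑ j, v i * v j * (x 0 ω i * x 0 ω j) := by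
      intro ω
      have h1 : (x 0 ω ⬝ᵥ v) = ∑ i, x 0 ω i * v i := rfl
      rw [h1, sq, Finset.sum_mul_sum]
      refine Finset.sum_congr rfl fun i _ => Finset.sum_congr rfl fun j _ => by ring
    have hintv : ∀ i j : Fin d, Integrable (fun ω => v i * v j * (x 0 ω i * x 0 ω j)) μ :=
      fun i j => (hint_xx 0 i j).const_mul _
    have hIv : ∫ ω, (x 0 ω ⬝ᵥ v) ^ 2 ∂μ = v ⬝ᵥ (Sx *ᵥ v) := by
      rw [show (fun ω => (x 0 ω ⬝ᵥ v) ^ 2) = fun ω =>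
        ∑ i, ∑ j, v i * v j * (x 0 ω i * x 0 ω j) from funext hptv,
        integral_finset_sum _ fun i _ => integrable_finset_sum _ fun j _ => hintv i j]
      have hrow : ∀ i : Fin d, (∫ ω, ∑ j, v i * v j * (x 0 ω i * x 0 ω j) ∂μ) =
          v i * ∑ j, Sx i j * v j := by
        intro i
        rw [integral_finset_sum _ fun j _ => hintv i j, Finset.mul_sum]
        refine Finset.sum_congr rfl fun j _ => ?_
        rw [integral_const_mul, hS 0 i j]
        ring
      rw [Finset.sum_congr rfl fun i _ => hrow i]
      simp [dotProduct, mulVec]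
    have hle : ∫ ω, (x 0 ω ⬝ᵥ v) ^ 2 ∂μ ≤ 1 := by
      have hint : Integrable (fun ω => (x 0 ω ⬝ᵥ v) ^ 2) μ := by
        refine lms_int_of_bound μ ((lms_meas_dot (hmeas 0)
          measurable_const).pow_const 2) (C := 1) fun ω => ?_
        rw [abs_of_nonneg (sq_nonneg _)]
        calc (x 0 ω ⬝ᵥ v) ^ 2 ≤ v ⬝ᵥ v := hCSx 0 ω v
          _ = 1 := hv1
      have := integral_mono hint (integrable_const 1) fun ω => by
        calc (x 0 ω ⬝ᵥ v) ^ 2 ≤ v ⬝ᵥ v := hCSx 0 ω v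
          _ = 1 := hv1
      simpa using this
    rw [hIv, hvSv] at hle
    exact hle
  have hfac : 0 ≤ 1 - γ * (2 - γ) * lammin := by
    nlinarith [sq_nonneg (γ - 1), mul_pos hγ0 (show (0:ℝ) < 2 - γ by linarith)]
  -- main induction
  intro t; induction t with
  | zero =>
    simp only [pow_zero, one_mul]
    have hconst : ∀ ω, (θ 0 ω - θstar) ⬝ᵥ (θ 0 ω - θstar) = θstar ⬝ᵥ θstar := by
      intro ω; simp [h0 ω, zero_sub, neg_dotProduct, dotProduct_neg]
    rw [show (fun ω => (θ 0 ω - θstar) ⬝ᵥ (θ 0 ω - θstar)) =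
      fun _ : Ω => θstar ⬝ᵥ θstar from funext hconst]
    simp
  | succ t ih =>
    have hc : 0 ≤ γ * (2 - γ) := mul_nonneg hγ0.le (by linarith)
    calc ∫ ω, (θ (t + 1) ω - θstar) ⬝ᵥ (θ (t + 1) ω - θstar) ∂μ
        = ∫ ω, ((θ t ω - θstar) ⬝ᵥ (θ t ω - θstar)
            - γ * (2 - γ) * (x t ω ⬝ᵥ (θ t ω - θstar)) ^ 2) ∂μ := by
          simp only [hkey]
      _ = (∫ ω, (θ t ω - θstar) ⬝ᵥ (θ t ω - θstar) ∂μ)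
            - γ * (2 - γ) * ∫ ω, (x t ω ⬝ᵥ (θ t ω - θstar)) ^ 2 ∂μ := by
          rw [integral_sub (hint_e2 t) ((hint_sq t).const_mul _), integral_const_mul]
      _ ≤ (∫ ω, (θ t ω - θstar) ⬝ᵥ (θ t ω - θstar) ∂μ)
            - γ * (2 - γ) * (lammin * ∫ ω, (θ t ω - θstar) ⬝ᵥ (θ t ω - θstar) ∂μ) := by
          have h := mul_le_mul_of_nonneg_left (hquad t) hc
          linarith
      _ = (1 - γ * (2 - γ) * lammin) * ∫ ω, (θ t ω - θstar) ⬝ᵥ (θ t ω - θstar) ∂μ := by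
          ring
      _ ≤ (1 - γ * (2 - γ) * lammin) *
            ((1 - γ * (2 - γ) * lammin) ^ t * (θstar ⬝ᵥ θstar)) :=
          mul_le_mul_of_nonneg_left ih hfac
      _ = (1 - γ * (2 - γ) * lammin) ^ (t + 1) * (θstar ⬝ᵥ θstar) := by ring
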